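/- Let P_0 ∈ ℝ^{n×n} be symmetric positive semidefinite with A^T P_0 + P_0 A = P_0 B B^T P_0. Let u : [0,∞) → ℝ^m be continuous and let x solve ẋ = A x + B u with x(0) = x_0. Then for every τ > 0, ∫_0^τ ‖u(t)‖² dt = x_0^T P_0 x_0 − x(τ)^T P_0 x(τ) + ∫_0^τ ‖u(t) + B^T P_0 x(t)‖² dt. Consequently, if in addition x(t) → 0 as t → ∞, then ∫_0^∞ ‖u(t)‖² dt ≥ x_0^T P_0 x_0. -/

import Mathlib

open Matrix MeasureTheory Filter

private lemma quad_hasDeriv {n : ℕ} (M : Matrix (Fin n) (Fin n) ℝ) (f : ℝ → Fin n → ℝ)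
    (f' : Fin n → ℝ) (s : Set ℝ) (t : ℝ) (hf : HasDerivWithinAt f f' s t) :
    HasDerivWithinAt (fun t => f t ⬝ᵥ M.mulVec (f t))
      (f' ⬝ᵥ M.mulVec (f t) + f t ⬝ᵥ M.mulVec f') s t := by
  have hfi : ∀ i, HasDerivWithinAt (fun t => f t i) (f' i) s t :=
    fun i => hasDerivWithinAt_pi.mp hf i
  have h : HasDerivWithinAt (fun t => ∑ i, ∑ j, f t i * (M i j * f t j))
      (∑ i, ∑ j, (f' i * (M i j * f t j) + f t i * (M i j * f' j))) s t := by
    apply HasDerivWithinAt.fun_sum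
    intro i _
    apply HasDerivWithinAt.fun_sum
    intro j _
    exact (hfi i).mul ((hfi j).const_mul (M i j))
  convert h using 1
  · ext r; simp [dotProduct, mulVec, Finset.mul_sum]
  · simp [dotProduct, mulVec, Finset.mul_sum, Finset.sum_add_distrib]

private lemma quad_algebra {n m : ℕ} (A : Matrix (Fin n) (Fin n) ℝ)
    (B : Matrix (Fin n) (Fin m) ℝ)
    (P₀ : Matrix (Fin n) (Fin n) ℝ) (hP : P₀.PosSemidef)
    (hare : Aᵀ * P₀ + P₀ * A = P₀ * B * Bᵀ * P₀)
    (v : Fin n → ℝ) (ut : Fin m → ℝ) :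
    (A.mulVec v + B.mulVec ut) ⬝ᵥ P₀.mulVec v + v ⬝ᵥ P₀.mulVec (A.mulVec v + B.mulVec ut)
      = (∑ k, (ut k + (Bᵀ * P₀).mulVec v k) ^ 2) - ∑ k, (ut k) ^ 2 := by
  have hsym : P₀ᵀ = P₀ := by
    have := hP.1
    rwa [Matrix.IsHermitian, conjTranspose_eq_transpose_of_trivial] at this
  set w : Fin m → ℝ := (Bᵀ * P₀).mulVec v with hw
  have hmv : ∀ {a b : ℕ} (M : Matrix (Fin a) (Fin b) ℝ) (p : Fin b → ℝ) (q : Fin a → ℝ),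
      (M.mulVec p) ⬝ᵥ q = p ⬝ᵥ (Mᵀ.mulVec q) := by
    intro a b M p q
    rw [dotProduct_comm, dotProduct_mulVec, dotProduct_comm, ← mulVec_transpose]
  have hRHS : (∑ k, (ut k + w k) ^ 2) - ∑ k, (ut k) ^ 2 = w ⬝ᵥ w + 2 * (ut ⬝ᵥ w) := by
    simp only [dotProduct]
    rw [← Finset.sum_sub_distrib, Finset.mul_sum, ← Finset.sum_add_distrib]
    congr 1; funext k; ring
  rw [hRHS]
  have hquad : v ⬝ᵥ (Aᵀ * P₀ + P₀ * A).mulVec v = w ⬝ᵥ w := by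
    rw [hare, hw]
    have : P₀ * B * Bᵀ * P₀ = (Bᵀ * P₀)ᵀ * (Bᵀ * P₀) := by
      rw [transpose_mul, transpose_transpose, hsym]; exact Matrix.mul_assoc (P₀ * B) Bᵀ P₀
    rw [this, ← mulVec_mulVec, hmv]
  have hT1 : (A.mulVec v) ⬝ᵥ P₀.mulVec v = v ⬝ᵥ (Aᵀ * P₀).mulVec v := by
    rw [hmv, mulVec_mulVec]
  have hT3 : v ⬝ᵥ P₀.mulVec (A.mulVec v) = v ⬝ᵥ (P₀ * A).mulVec v := by
    rw [mulVec_mulVec]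
  have hT2 : (B.mulVec ut) ⬝ᵥ P₀.mulVec v = ut ⬝ᵥ w := by
    rw [hmv, hw, mulVec_mulVec]
  have hT4 : v ⬝ᵥ P₀.mulVec (B.mulVec ut) = ut ⬝ᵥ w := by
    rw [mulVec_mulVec, dotProduct_mulVec, ← mulVec_transpose, transpose_mul, hsym,
      dotProduct_comm, hw]
  rw [add_dotProduct, mulVec_add, dotProduct_add, hT1, hT2, hT3, hT4]
  have h2 := hquad
  rw [add_mulVec, dotProduct_add] at h2
  linarith

/-- If `P₀` is symmetric positive semidefinite with
`Aᵀ P₀ + P₀ A = P₀ B Bᵀ P₀`, `u` is continuous on `[0,∞)` and `x` solves `ẋ = A x + B u` with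
`x(0) = x₀`, then for every `τ > 0`,
`∫_0^τ ‖u‖² dt = x₀ᵀ P₀ x₀ − x(τ)ᵀ P₀ x(τ) + ∫_0^τ ‖u + Bᵀ P₀ x‖² dt`;
consequently if moreover `x(t) → 0` as `t → ∞`, then `∫_0^∞ ‖u‖² dt ≥ x₀ᵀ P₀ x₀` (stated with
the lower Lebesgue integral so that an infinite energy integral is handled correctly). -/
theorem energy_completion_of_squares {n m : ℕ}
    (A : Matrix (Fin n) (Fin n) ℝ) (B : Matrix (Fin n) (Fin m) ℝ)
    (P₀ : Matrix (Fin n) (Fin n) ℝ) (hP : P₀.PosSemidef)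
    (hare : Aᵀ * P₀ + P₀ * A = P₀ * B * Bᵀ * P₀)
    (u : ℝ → Fin m → ℝ) (hu : ContinuousOn u (Set.Ici 0))
    (x : ℝ → Fin n → ℝ) (x₀ : Fin n → ℝ) (hx0 : x 0 = x₀)
    (hode : ∀ t ∈ Set.Ici (0:ℝ),
      HasDerivWithinAt x (A.mulVec (x t) + B.mulVec (u t)) (Set.Ici 0) t) :
    (∀ τ : ℝ, 0 < τ →
      ∫ t in (0:ℝ)..τ, ∑ k, (u t k) ^ 2 =
        dotProduct x₀ (P₀.mulVec x₀) -
          dotProduct (x τ) (P₀.mulVec (x τ)) +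
          ∫ t in (0:ℝ)..τ, ∑ k, (u t k + (Bᵀ * P₀).mulVec (x t) k) ^ 2) ∧
    (Tendsto x atTop (nhds 0) →
      ENNReal.ofReal (dotProduct x₀ (P₀.mulVec x₀)) ≤
        ∫⁻ t in Set.Ioi (0:ℝ), ENNReal.ofReal (∑ k, (u t k) ^ 2)) := by
  -- abbreviations
  set w : ℝ → Fin m → ℝ := fun t => (Bᵀ * P₀).mulVec (x t) with hwdef
  set V : ℝ → ℝ := fun t => x t ⬝ᵥ P₀.mulVec (x t) with hVdef
  -- continuity facts
  have hxc : ContinuousOn x (Set.Ici 0) := fun t ht => (hode t ht).continuousWithinAt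
  have hlin : Continuous fun v : Fin n → ℝ => (Bᵀ * P₀).mulVec v :=
    LinearMap.continuous_of_finiteDimensional ((Bᵀ * P₀).mulVecLin)
  have hlinP : Continuous fun v : Fin n → ℝ => P₀.mulVec v :=
    LinearMap.continuous_of_finiteDimensional (P₀.mulVecLin)
  have hq : Continuous fun v : Fin n → ℝ => v ⬝ᵥ P₀.mulVec v := by
    apply continuous_finset_sum
    intro i _
    exact (continuous_apply i).mul ((continuous_apply i).comp hlinP)
  have hwc : ContinuousOn w (Set.Ici 0) := hlin.comp_continuousOn hxc
  have hVc : ContinuousOn V (Set.Ici 0) := hq.comp_continuousOn hxc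
  have hcont1 : ContinuousOn (fun t => ∑ k, (u t k) ^ 2) (Set.Ici 0) := by
    apply continuousOn_finset_sum
    intro k _
    exact (((continuous_apply k).comp_continuousOn hu)).pow 2
  have hcont2 : ContinuousOn (fun t => ∑ k, (u t k + w t k) ^ 2) (Set.Ici 0) := by
    apply continuousOn_finset_sum
    intro k _
    exact (((continuous_apply k).comp_continuousOn hu).add
      ((continuous_apply k).comp_continuousOn hwc)).pow 2
  -- derivative of V
  have hVderiv : ∀ t ∈ Set.Ici (0:ℝ),
      HasDerivWithinAt V ((∑ k, (u t k + w t k) ^ 2) - ∑ k, (u t k) ^ 2) (Set.Ici 0) t := by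
    intro t ht
    have h := quad_hasDeriv P₀ x (A.mulVec (x t) + B.mulVec (u t)) (Set.Ici 0) t (hode t ht)
    have halg := quad_algebra A B P₀ hP hare (x t) (u t)
    rw [halg] at h
    exact h
  -- part 1
  have part1 : ∀ τ : ℝ, 0 < τ →
      ∫ t in (0:ℝ)..τ, ∑ k, (u t k) ^ 2 =
        dotProduct x₀ (P₀.mulVec x₀) -
          dotProduct (x τ) (P₀.mulVec (x τ)) +
          ∫ t in (0:ℝ)..τ, ∑ k, (u t k + w t k) ^ 2 := by
    intro τ hτ
    have hsub : Set.uIcc (0:ℝ) τ ⊆ Set.Ici 0 := by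
      rw [Set.uIcc_of_le hτ.le]; exact Set.Icc_subset_Ici_self
    have hint1 : IntervalIntegrable (fun t => ∑ k, (u t k) ^ 2) volume 0 τ :=
      (hcont1.mono hsub).intervalIntegrable
    have hint2 : IntervalIntegrable (fun t => ∑ k, (u t k + w t k) ^ 2) volume 0 τ :=
      (hcont2.mono hsub).intervalIntegrable
    have hftc : ∫ t in (0:ℝ)..τ, ((∑ k, (u t k + w t k) ^ 2) - ∑ k, (u t k) ^ 2)
        = V τ - V 0 := by
      apply intervalIntegral.integral_eq_sub_of_hasDeriv_right_of_le hτ.le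
        (hVc.mono (by rw [Set.uIcc_of_le hτ.le] at hsub; exact hsub))
      · intro t ht
        exact (hVderiv t (le_of_lt ht.1)).mono (fun s hs => le_of_lt (lt_trans ht.1 hs))
      · exact hint2.sub hint1
    rw [intervalIntegral.integral_sub hint2 hint1] at hftc
    have hV0 : V 0 = dotProduct x₀ (P₀.mulVec x₀) := by rw [hVdef]; simp [hx0]
    have hVτ : V τ = dotProduct (x τ) (P₀.mulVec (x τ)) := rfl
    rw [← hV0, ← hVτ]
    linarith
  refine ⟨part1, ?_⟩
  -- part 2
  intro htend
  have hVt : Tendsto V atTop (nhds 0) := by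
    have h := (hq.tendsto 0).comp htend
    simp only [mulVec_zero, dotProduct_zero] at h
    exact h
  set L := ∫⁻ t in Set.Ioi (0:ℝ), ENNReal.ofReal (∑ k, (u t k) ^ 2) with hL
  have htend2 : Tendsto (fun τ => ENNReal.ofReal (dotProduct x₀ (P₀.mulVec x₀) - V τ))
      atTop (nhds (ENNReal.ofReal (dotProduct x₀ (P₀.mulVec x₀)))) := by
    have h : Tendsto (fun τ => dotProduct x₀ (P₀.mulVec x₀) - V τ) atTop
        (nhds (dotProduct x₀ (P₀.mulVec x₀))) := by
      simpa using (tendsto_const_nhds.sub hVt)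
    exact (ENNReal.continuous_ofReal.tendsto _).comp h
  apply le_of_tendsto htend2
  filter_upwards [eventually_gt_atTop (0:ℝ)] with τ hτ
  have h1 := part1 τ hτ
  have hsub : Set.uIcc (0:ℝ) τ ⊆ Set.Ici 0 := by
    rw [Set.uIcc_of_le hτ.le]; exact Set.Icc_subset_Ici_self
  have hint1 : IntervalIntegrable (fun t => ∑ k, (u t k) ^ 2) volume 0 τ :=
    (hcont1.mono hsub).intervalIntegrable
  have hnn : 0 ≤ ∫ t in (0:ℝ)..τ, ∑ k, (u t k + w t k) ^ 2 :=
    intervalIntegral.integral_nonneg hτ.le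
      (fun t _ => Finset.sum_nonneg fun k _ => sq_nonneg _)
  have hle : dotProduct x₀ (P₀.mulVec x₀) - V τ
      ≤ ∫ t in (0:ℝ)..τ, ∑ k, (u t k) ^ 2 := by
    have : V τ = dotProduct (x τ) (P₀.mulVec (x τ)) := rfl
    rw [this]; linarith
  calc ENNReal.ofReal (dotProduct x₀ (P₀.mulVec x₀) - V τ)
      ≤ ENNReal.ofReal (∫ t in (0:ℝ)..τ, ∑ k, (u t k) ^ 2) := ENNReal.ofReal_le_ofReal hle
    _ = ∫⁻ t in Set.Ioc (0:ℝ) τ, ENNReal.ofReal (∑ k, (u t k) ^ 2) := by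
        rw [intervalIntegral.integral_of_le hτ.le]
        exact ofReal_integral_eq_lintegral_ofReal hint1.1
          (Filter.Eventually.of_forall fun t => Finset.sum_nonneg fun k _ => sq_nonneg _)
    _ ≤ L := by
        rw [hL]
        exact lintegral_mono_set Set.Ioc_subset_Ioi_self
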